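/- G is generated by the four elements (0,⟨⟩), a, b₀, and t; in particular, G is finitely generated. -/

import Mathlib

/-- Generators of the group `K`: tree vertices `(n,τ)`, the letter `a`, and letters `bᵢ`. -/
inductive KGen : Type
  | vert : ℕ → List ℤ → KGen
  | a : KGen
  | b : ℤ → KGen
  deriving DecidableEq

/-- The parent `(n,τ)⁻` of a vertex `(n,τ)` of the tree `T`. -/
def parent : ℕ → List ℤ → ℕ × List ℤ
  | n, [] => (n + 1, [])
  | n, τ => (n, τ.dropLast)

/-- Words over an alphabet `α` (a letter together with `true` for the letter itself,
`false` for its formal inverse). -/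
abbrev Word (α : Type) := List (α × Bool)

/-- The word `u(x,y) = x y x² y x³ y ⋯ x¹⁰⁰ y`. -/
def uWord {α : Type} (x y : α) : Word α :=
  (List.range 100).flatMap fun k => List.replicate (k + 1) (x, true) ++ [(y, true)]

/-- The relator words of the presentation of `K`:
`u((n,τ),a) ((n,τ)⁻)⁻¹` and `u((n,τ),bᵢ) ((n,τ⌢⟨i⟩))⁻¹`. -/
def KRelWords : Set (Word KGen) :=
  { w | (∃ (n : ℕ) (τ : List ℤ), w = uWord (KGen.vert n τ) KGen.a ++ [(KGen.vert (parent n τ).1 (parent n τ).2, false)]) ∨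
        (∃ (n : ℕ) (τ : List ℤ) (i : ℤ), w = uWord (KGen.vert n τ) (KGen.b i) ++ [(KGen.vert n (τ ++ [i]), false)]) }

/-- The relators of `K` as elements of the free group. -/
def KRels : Set (FreeGroup KGen) := FreeGroup.mk '' KRelWords

/-- The group `K`. -/
abbrev K := PresentedGroup KRels

/-- Generators of `G`: the generators of `K` together with the stable letter `t = none`. -/
abbrev GGen := Option KGen

/-- The relator words of the presentation of `G = ⟨K, t ∣ t bᵢ t⁻¹ = b_{i+1}⟩`:
the relators of `K` together with `t bᵢ t⁻¹ b_{i+1}⁻¹`. -/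
def GRelWords : Set (Word GGen) :=
  (fun w : Word KGen => w.map fun p => (some p.1, p.2)) '' KRelWords ∪
    { w | ∃ i : ℤ, w = [((none : GGen), true), (some (KGen.b i), true), ((none : GGen), false),
        (some (KGen.b (i + 1)), false)] }

/-- The relators of `G` as elements of the free group. -/
def GRels : Set (FreeGroup GGen) := FreeGroup.mk '' GRelWords

/-- The group `G`, the HNN extension of `K` along `bᵢ ↦ b_{i+1}`. -/
abbrev G := PresentedGroup GRels

/-- The vertex `(n,τ)` as an element of `G`. -/
def gvert (n : ℕ) (τ : List ℤ) : G := PresentedGroup.of (some (KGen.vert n τ))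

/-- `a` as an element of `G`. -/
def ga : G := PresentedGroup.of (some KGen.a)

/-- `bᵢ` as an element of `G`. -/
def gb (i : ℤ) : G := PresentedGroup.of (some (KGen.b i))

/-- The stable letter `t` as an element of `G`. -/
def gt' : G := PresentedGroup.of (none : GGen)




lemma mk_eq_prod {α : Type} (w : List (α × Bool)) :
    FreeGroup.mk w = (w.map fun p => cond p.2 (FreeGroup.of p.1) (FreeGroup.of p.1)⁻¹).prod := by
  induction w with
  | nil => simp [← FreeGroup.one_eq_mk]
  | cons p w ih =>
    have : FreeGroup.mk (p :: w) = FreeGroup.mk [p] * FreeGroup.mk w := by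
      rw [FreeGroup.mul_mk]; rfl
    rw [this, ih, List.map_cons, List.prod_cons]
    congr 1
    rcases p with ⟨x, b⟩
    cases b
    · show FreeGroup.mk [(x, false)] = (FreeGroup.of x)⁻¹
      rw [show (FreeGroup.of x : FreeGroup α) = FreeGroup.mk [(x,true)] from rfl,
        FreeGroup.inv_mk]
      rfl
    · rfl

/-- The group element `u(x,y)`. -/
def gU (x y : G) : G := ((List.range 100).flatMap fun k => List.replicate (k + 1) x ++ [y]).prod

lemma grel_eq_one {w : Word GGen} (hw : w ∈ GRelWords) :
    PresentedGroup.mk GRels (FreeGroup.mk w) = 1 := by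
  rw [PresentedGroup.mk_eq_one_iff]
  exact Subgroup.subset_normalClosure (Set.mem_image_of_mem _ hw)

lemma rel_eq {x y z : GGen} (hw : (uWord x y ++ [(z, false)]) ∈ GRelWords) :
    (PresentedGroup.of z : G) = gU (PresentedGroup.of x) (PresentedGroup.of y) := by
  have h1 := grel_eq_one hw
  rw [mk_eq_prod, map_list_prod, List.map_map, List.map_append] at h1
  simp only [uWord, List.map_flatMap, List.map_append, List.map_replicate, List.map_cons,
    List.map_nil, Function.comp, cond_true, cond_false, map_inv, List.prod_append,
    List.prod_cons, List.prod_nil, mul_one] at h1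
  have h2 : gU (PresentedGroup.of x) (PresentedGroup.of y) * (PresentedGroup.of z : G)⁻¹ = 1 := by
    rw [← h1]; rfl
  rw [mul_inv_eq_one] at h2
  exact h2.symm

lemma map_uword (x y : KGen) (z : KGen) :
    (uWord x y ++ [(z, false)]).map (fun p => ((some p.1 : GGen), p.2)) =
      uWord (some x : GGen) (some y) ++ [((some z : GGen), false)] := by
  simp [uWord, List.map_flatMap]

lemma rel1 (n : ℕ) (τ : List ℤ) :
    gvert (parent n τ).1 (parent n τ).2 = gU (gvert n τ) ga :=
  rel_eq (Or.inl ⟨_, Or.inl ⟨n, τ, rfl⟩, map_uword _ _ _⟩)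

lemma rel2 (n : ℕ) (τ : List ℤ) (i : ℤ) :
    gvert n (τ ++ [i]) = gU (gvert n τ) (gb i) :=
  rel_eq (Or.inl ⟨_, Or.inr ⟨n, τ, i, rfl⟩, map_uword _ _ _⟩)

lemma rel3 (i : ℤ) : gb (i + 1) = gt' * gb i * gt'⁻¹ := by
  have h1 := grel_eq_one (Or.inr ⟨i, rfl⟩)
  rw [mk_eq_prod, map_list_prod] at h1
  simp only [List.map_cons, List.map_nil, Function.comp, cond_true, cond_false, map_inv,
    List.prod_cons, List.prod_nil, mul_one] at h1
  have h2 : gt' * gb i * gt'⁻¹ * (gb (i + 1))⁻¹ = 1 := by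
    rw [← h1]; group; rfl
  rw [mul_inv_eq_one] at h2
  exact h2.symm

lemma gU_mem {H : Subgroup G} {x y : G} (hx : x ∈ H) (hy : y ∈ H) : gU x y ∈ H := by
  refine Subgroup.list_prod_mem _ ?_
  intro g hg
  simp only [List.mem_flatMap, List.mem_append, List.mem_replicate, List.mem_singleton,
    List.mem_range] at hg
  obtain ⟨k, -, h | h⟩ := hg
  · exact h.2 ▸ hx
  · exact h ▸ hy


/-- `G` is generated by `(0,⟨⟩)`, `a`, `b₀` and `t`; in particular it is finitely generated. -/
theorem stmt8 : Subgroup.closure {gvert 0 [], ga, gb 0, gt'} = ⊤ ∧ Group.FG G := by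
  have key : Subgroup.closure {gvert 0 [], ga, gb 0, gt'} = ⊤ := by
    set H := Subgroup.closure {gvert 0 [], ga, gb 0, gt'} with hH
    have hga : ga ∈ H := Subgroup.subset_closure (by simp)
    have hgt : gt' ∈ H := Subgroup.subset_closure (by simp)
    have hb : ∀ i : ℤ, gb i ∈ H := by
      intro i
      induction i using Int.induction_on with
      | zero => exact Subgroup.subset_closure (by simp)
      | succ i ih => rw [rel3 i]; exact H.mul_mem (H.mul_mem hgt ih) (H.inv_mem hgt)
      | pred i ih =>
        have : gb (-(i : ℤ) - 1) = gt'⁻¹ * gb (-i) * gt' := by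
          have := rel3 (-(i : ℤ) - 1)
          rw [sub_add_cancel] at this
          rw [this]; group
        rw [show (-(i : ℤ) - 1 : ℤ) = -↑i - 1 by ring] at this
        rw [this]; exact H.mul_mem (H.mul_mem (H.inv_mem hgt) ih) hgt
    have hv0 : ∀ n : ℕ, gvert n [] ∈ H := by
      intro n
      induction n with
      | zero => exact Subgroup.subset_closure (by simp)
      | succ n ih =>
        have := rel1 n []
        simp only [parent] at this
        rw [this]
        exact gU_mem ih hga
    have hv : ∀ (τ : List ℤ) (n : ℕ), gvert n τ ∈ H := by
      intro τ
      induction τ using List.reverseRecOn with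
      | nil => exact hv0
      | append_singleton τ i ih =>
        intro n
        rw [rel2 n τ i]
        exact gU_mem (ih n) (hb i)
    refine (Subgroup.eq_top_iff' H).mpr ?_
    refine PresentedGroup.generated_by GRels H ?_
    rintro (_ | v)
    · exact hgt
    · cases v with
      | vert n τ => exact hv τ n
      | a => exact hga
      | b i => exact hb i
  exact ⟨key, Group.fg_iff.mpr ⟨_, key, Set.toFinite _⟩⟩
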